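/- Under the stated continuity and boundedness conditions, the gradient of the one-step model reward error satisfies: sup_{ŝ_t, â_t} ‖∇_{â_t} r̂_{t+1} − ∇_{â_t} r_{t+1}‖ ≤ L_{∇r} B_{∇fa} c_m + B_{∇rs} B_{∇δa}. -/

import Mathlib

/-- One-step model reward-gradient error bound:
`sup ‖∇_{ah} r̂_{t+1} − ∇_{ah} r_{t+1}‖ ≤ L_{∇r} B_{∇fa} c_m + B_{∇rs} B_{∇δa}`. -/
theorem one_step_reward_gradient_error
    {S A : Type*} [NormedAddCommGroup S] [NormedSpace ℝ S]
    [NormedAddCommGroup A] [NormedSpace ℝ A]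
    (p f δ : S → A → S) (r : S → A → ℝ) (π : S → A)
    (Lr Bfa Brs Bδa cm : ℝ)
    (hLr : 0 ≤ Lr) (hBfa : 0 ≤ Bfa) (hBrs : 0 ≤ Brs) (hBδa : 0 ≤ Bδa) (hcm : 0 ≤ cm)
    -- p(s,a) = f(s,a) + δ(s,a)
    (hpf : ∀ s a, p s a = f s a + δ s a)
    -- differentiability assumptions
    (hrdiff : Differentiable ℝ (fun u : S => r u (π u)))
    (hfdiff : ∀ s, Differentiable ℝ (fun a : A => f s a))
    (hδdiff : ∀ s, Differentiable ℝ (fun a : A => δ s a))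
    -- ∇_s r(s, π(s)) is Lr-Lipschitz
    (hrLip : ∀ x y : S,
      ‖fderiv ℝ (fun u : S => r u (π u)) x - fderiv ℝ (fun u : S => r u (π u)) y‖ ≤
        Lr * ‖x - y‖)
    -- boundedness conditions
    (hBfa' : ∀ s a, ‖fderiv ℝ (fun a' : A => f s a') a‖ ≤ Bfa)
    (hBrs' : ∀ s, ‖fderiv ℝ (fun u : S => r u (π u)) s‖ ≤ Brs)
    (hBδa' : ∀ s a, ‖fderiv ℝ (fun a' : A => δ s a') a‖ ≤ Bδa)
    -- one-step model state error bound
    (hstate : ∀ s a, ‖δ s a‖ ≤ cm) :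
    ∀ (sh : S) (ah : A),
      ‖fderiv ℝ (fun a : A => r (f sh a) (π (f sh a))) ah -
          fderiv ℝ (fun a : A => r (p sh a) (π (p sh a))) ah‖ ≤
        Lr * Bfa * cm + Brs * Bδa := by
  intro sh ah
  set g : S → ℝ := fun u => r u (π u) with hg
  have hfA : DifferentiableAt ℝ (fun a : A => f sh a) ah := hfdiff sh ah
  have hδA : DifferentiableAt ℝ (fun a : A => δ sh a) ah := hδdiff sh ah
  set Df := fderiv ℝ (fun a : A => f sh a) ah with hDf
  set Dδ := fderiv ℝ (fun a : A => δ sh a) ah with hDδ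
  -- rewrite p
  have hpfun : (fun a : A => p sh a) = (fun a : A => f sh a + δ sh a) := by
    funext a; exact hpf sh a
  have hpA : DifferentiableAt ℝ (fun a : A => p sh a) ah := by
    rw [hpfun]; exact hfA.add hδA
  have hDp : fderiv ℝ (fun a : A => p sh a) ah = Df + Dδ := by
    rw [hpfun]; exact fderiv_add hfA hδA
  -- chain rules
  have hchain1 : fderiv ℝ (fun a : A => g (f sh a)) ah
      = (fderiv ℝ g (f sh ah)).comp Df :=
    fderiv_comp ah (hrdiff _) hfA
  have hchain2 : fderiv ℝ (fun a : A => g (p sh a)) ah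
      = (fderiv ℝ g (p sh ah)).comp (Df + Dδ) := by
    have h := fderiv_comp ah (hrdiff (p sh ah)) hpA
    rw [hDp] at h
    exact h
  have heq1 : (fun a : A => r (f sh a) (π (f sh a))) = fun a : A => g (f sh a) := rfl
  have heq2 : (fun a : A => r (p sh a) (π (p sh a))) = fun a : A => g (p sh a) := rfl
  rw [heq1, heq2, hchain1, hchain2]
  have key : (fderiv ℝ g (f sh ah)).comp Df - (fderiv ℝ g (p sh ah)).comp (Df + Dδ)
      = (fderiv ℝ g (f sh ah) - fderiv ℝ g (p sh ah)).comp Df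
        - (fderiv ℝ g (p sh ah)).comp Dδ := by
    ext x
    simp [ContinuousLinearMap.comp_apply, map_add]
    ring
  rw [key]
  have hdist : ‖f sh ah - p sh ah‖ ≤ cm := by
    rw [hpf sh ah]
    have : f sh ah - (f sh ah + δ sh ah) = -(δ sh ah) := by abel
    rw [this, norm_neg]; exact hstate sh ah
  have h1 : ‖(fderiv ℝ g (f sh ah) - fderiv ℝ g (p sh ah)).comp Df‖ ≤ Lr * cm * Bfa := by
    calc ‖(fderiv ℝ g (f sh ah) - fderiv ℝ g (p sh ah)).comp Df‖
        ≤ ‖fderiv ℝ g (f sh ah) - fderiv ℝ g (p sh ah)‖ * ‖Df‖ :=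
          ContinuousLinearMap.opNorm_comp_le _ _
      _ ≤ (Lr * cm) * Bfa := by
          apply mul_le_mul _ (hBfa' sh ah) (norm_nonneg _) (by positivity)
          calc ‖fderiv ℝ g (f sh ah) - fderiv ℝ g (p sh ah)‖
              ≤ Lr * ‖f sh ah - p sh ah‖ := hrLip _ _
            _ ≤ Lr * cm := by exact mul_le_mul_of_nonneg_left hdist hLr
  have h2 : ‖(fderiv ℝ g (p sh ah)).comp Dδ‖ ≤ Brs * Bδa := by
    calc ‖(fderiv ℝ g (p sh ah)).comp Dδ‖
        ≤ ‖fderiv ℝ g (p sh ah)‖ * ‖Dδ‖ := ContinuousLinearMap.opNorm_comp_le _ _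
      _ ≤ Brs * Bδa := mul_le_mul (hBrs' _) (hBδa' sh ah) (norm_nonneg _) hBrs
  calc ‖(fderiv ℝ g (f sh ah) - fderiv ℝ g (p sh ah)).comp Df
        - (fderiv ℝ g (p sh ah)).comp Dδ‖
      ≤ ‖(fderiv ℝ g (f sh ah) - fderiv ℝ g (p sh ah)).comp Df‖
        + ‖(fderiv ℝ g (p sh ah)).comp Dδ‖ := norm_sub_le _ _
    _ ≤ Lr * cm * Bfa + Brs * Bδa := add_le_add h1 h2
    _ = Lr * Bfa * cm + Brs * Bδa := by ring
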